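/- Let F_1,…,F_r be nonempty subsets of [n] with ⋃ F_i = [n], and suppose the intersection graph on {1,…,r} with edges {i,j} when F_i ∩ F_j ≠ ∅ is connected. Choose a spanning tree with edges e_1,…,e_{r-1}, where e_k = {i_k, j_k}, and pick l_k ∈ F_{i_k} ∩ F_{j_k}. Let z = x_{l_1} ⋯ x_{l_{r-1}} and I = P_{F_1} ⋯ P_{F_r}. Then z ∉ I and (I : z) = (x_1,…,x_n). -/

import Mathlib

open MvPolynomial

/-- The monomial prime ideal `P_F = (x_i : i ∈ F)`. -/
noncomputable def PF {K : Type} [Field K] {n : ℕ} (F : Finset (Fin n)) :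
    Ideal (MvPolynomial (Fin n) K) :=
  Ideal.span ((fun i => (X i : MvPolynomial (Fin n) K)) '' ↑F)

/-- The ideal of polynomials all of whose monomials have degree at least `k`. -/
noncomputable def Jdeg (K : Type) [Field K] (n k : ℕ) : Ideal (MvPolynomial (Fin n) K) where
  carrier := {p | ∀ d ∈ p.support, k ≤ d.sum fun _ m => m}
  zero_mem' := by simp
  add_mem' := by
    classical
    intro a b ha hb d hd
    rcases Finset.mem_union.mp (MvPolynomial.support_add hd) with h | h
    · exact ha d h
    · exact hb d h
  smul_mem' := by
    classical
    intro c p hp d hd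
    rw [smul_eq_mul] at hd
    obtain ⟨d1, hd1, d2, hd2, rfl⟩ := Finset.mem_add.mp (MvPolynomial.support_mul _ _ hd)
    have h2 : k ≤ d2.sum fun _ m => m := hp d2 hd2
    rw [Finsupp.sum_add_index' (fun _ => rfl) (fun _ _ _ => rfl)]
    omega

lemma Jdeg_mul_le {K : Type} [Field K] {n : ℕ} (a b : ℕ) :
    Jdeg K n a * Jdeg K n b ≤ Jdeg K n (a + b) := by
  classical
  rw [Ideal.mul_le]
  intro p hp q hq d hd
  obtain ⟨d1, hd1, d2, hd2, rfl⟩ := Finset.mem_add.mp (MvPolynomial.support_mul _ _ hd)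
  have h1 : a ≤ d1.sum fun _ m => m := hp d1 hd1
  have h2 : b ≤ d2.sum fun _ m => m := hq d2 hd2
  rw [Finsupp.sum_add_index' (fun _ => rfl) (fun _ _ _ => rfl)]
  omega

lemma PF_le_Jdeg {K : Type} [Field K] {n : ℕ} (F : Finset (Fin n)) :
    PF (K := K) F ≤ Jdeg K n 1 := by
  rw [PF, Ideal.span_le]
  rintro _ ⟨i, -, rfl⟩ d hd
  rw [MvPolynomial.support_X, Finset.mem_singleton] at hd
  subst hd
  rw [Finsupp.sum_single_index rfl]

/-- In a connected graph, every vertex other than `i0` has a neighbor strictly closer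
to `i0`. -/
lemma exists_pred {V : Type*} {G : SimpleGraph V} (hc : G.Connected) {i0 v : V}
    (hv : v ≠ i0) : ∃ u, G.Adj u v ∧ G.dist i0 u + 1 = G.dist i0 v := by
  obtain ⟨p, hp⟩ := hc.exists_walk_length_eq_dist v i0
  cases p with
  | nil => exact absurd rfl hv
  | @cons _ u _ h q =>
    refine ⟨u, h.symm, ?_⟩
    have h1 : G.dist i0 u ≤ q.length := by
      rw [SimpleGraph.dist_comm]; exact SimpleGraph.dist_le q
    have h2 : G.dist i0 v ≤ G.dist i0 u + 1 := by
      have ht := hc.dist_triangle (u := i0) (v := u) (w := v)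
      have hd1 : G.dist u v = 1 := SimpleGraph.dist_eq_one_iff_adj.mpr h.symm
      omega
    have h3 : G.dist i0 v = q.length + 1 := by
      rw [SimpleGraph.dist_comm]
      rw [SimpleGraph.Walk.length_cons] at hp
      omega
    omega

theorem stmt8 {K : Type} [Field K] {n r : ℕ} (hr : 0 < r)
    (F : Fin r → Finset (Fin n)) (hF : ∀ i, (F i).Nonempty)
    (hcover : Finset.univ.biUnion F = Finset.univ)
    (e : Fin (r - 1) → Fin r × Fin r) (hne : ∀ k, (e k).1 ≠ (e k).2)
    (T : SimpleGraph (Fin r))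
    (hT : T = SimpleGraph.fromRel fun i j => ∃ k, e k = (i, j))
    (hTconn : T.Connected) (hTacyc : T.IsAcyclic)
    (l : Fin (r - 1) → Fin n) (hl : ∀ k, l k ∈ F (e k).1 ∩ F (e k).2) :
    (∏ k, X (l k) : MvPolynomial (Fin n) K) ∉ ∏ i, PF (K := K) (F i) ∧
      (∏ i, PF (K := K) (F i)).colon
          ((Ideal.span {∏ k, X (l k)} : Ideal (MvPolynomial (Fin n) K)) :
            Set (MvPolynomial (Fin n) K)) =
        Ideal.span (Set.range (X : Fin n → MvPolynomial (Fin n) K)) := by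
  classical
  set z : MvPolynomial (Fin n) K := ∏ k, X (l k) with hzdef
  set I : Ideal (MvPolynomial (Fin n) K) := ∏ i, PF (K := K) (F i) with hIdef
  -- `z` as a monomial
  have hzmon : ∀ s : Finset (Fin (r - 1)),
      (∏ k ∈ s, X (l k) : MvPolynomial (Fin n) K) =
        monomial (∑ k ∈ s, Finsupp.single (l k) 1) 1 := by
    intro s
    induction s using Finset.cons_induction with
    | empty => simp [MvPolynomial.monomial_zero']
    | cons a s ha ih =>
      rw [Finset.prod_cons, Finset.sum_cons, ih, MvPolynomial.X, MvPolynomial.monomial_mul,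
        one_mul]
  have hdeg : ∀ s : Finset (Fin (r - 1)),
      ((∑ k ∈ s, Finsupp.single (l k) 1 : Fin n →₀ ℕ).sum fun _ m => m) = s.card := by
    intro s
    induction s using Finset.cons_induction with
    | empty => simp
    | cons a s ha ih =>
      rw [Finset.sum_cons, Finsupp.sum_add_index' (fun _ => rfl) (fun _ _ _ => rfl), ih,
        Finsupp.sum_single_index rfl, Finset.card_cons, add_comm]
  -- The product ideal is contained in `Jdeg r`
  have hprod : ∀ s : Finset (Fin r), (∏ i ∈ s, PF (K := K) (F i)) ≤ Jdeg K n s.card := by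
    intro s
    induction s using Finset.cons_induction with
    | empty => intro p _ d hd; simp
    | cons a s ha ih =>
      rw [Finset.prod_cons, Finset.card_cons]
      calc PF (K := K) (F a) * ∏ i ∈ s, PF (K := K) (F i)
          ≤ Jdeg K n 1 * Jdeg K n s.card :=
            Ideal.mul_mono (PF_le_Jdeg _) ih
        _ ≤ Jdeg K n (1 + s.card) := Jdeg_mul_le 1 s.card
        _ = Jdeg K n (s.card + 1) := by rw [add_comm]
  -- part 1 : z ∉ I
  have part1 : z ∉ I := by
    intro hz
    have hJ : z ∈ Jdeg K n r := by
      have := hprod Finset.univ hz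
      rwa [Finset.card_univ, Fintype.card_fin] at this
    have hsupp : (∑ k, Finsupp.single (l k) 1 : Fin n →₀ ℕ) ∈ z.support := by
      rw [hzdef, hzmon Finset.univ, MvPolynomial.support_monomial, if_neg one_ne_zero]
      exact Finset.mem_singleton_self _
    have := hJ _ hsupp
    rw [hdeg Finset.univ, Finset.card_univ, Fintype.card_fin] at this
    omega
  -- key combinatorial fact : for any root i0, edges can be assigned injectively to
  -- non-root vertices
  have key : ∀ t : Fin n, X t * z ∈ I := by
    intro t
    have ht : ∃ i0, t ∈ F i0 := by
      have : t ∈ Finset.univ.biUnion F := hcover ▸ Finset.mem_univ t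
      obtain ⟨i0, -, hi0⟩ := Finset.mem_biUnion.mp this
      exact ⟨i0, hi0⟩
    obtain ⟨i0, hti0⟩ := ht
    -- assignment: for each v ≠ i0, an edge having v as its far endpoint
    have hP : ∀ v : Fin r, v ≠ i0 → ∃ k : Fin (r - 1),
        ((e k).1 = v ∧ T.dist i0 (e k).2 + 1 = T.dist i0 v) ∨
        ((e k).2 = v ∧ T.dist i0 (e k).1 + 1 = T.dist i0 v) := by
      intro v hv
      obtain ⟨u, hadj, hdu⟩ := exists_pred hTconn hv
      rw [hT, SimpleGraph.fromRel_adj] at hadj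
      obtain ⟨-, hk | hk⟩ := hadj
      · obtain ⟨k, hk⟩ := hk
        exact ⟨k, Or.inr ⟨by rw [hk], by rw [hk]; exact hdu⟩⟩
      · obtain ⟨k, hk⟩ := hk
        exact ⟨k, Or.inl ⟨by rw [hk], by rw [hk]; exact hdu⟩⟩
    let f : ∀ v : Fin r, v ≠ i0 → Fin (r - 1) := fun v hv => (hP v hv).choose
    have hf : ∀ v (hv : v ≠ i0),
        ((e (f v hv)).1 = v ∧ T.dist i0 (e (f v hv)).2 + 1 = T.dist i0 v) ∨
        ((e (f v hv)).2 = v ∧ T.dist i0 (e (f v hv)).1 + 1 = T.dist i0 v) :=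
      fun v hv => (hP v hv).choose_spec
    have hfinj : ∀ v₁ v₂ (h1 : v₁ ≠ i0) (h2 : v₂ ≠ i0), f v₁ h1 = f v₂ h2 → v₁ = v₂ := by
      intro v₁ v₂ h1 h2 hf12
      by_contra hne12
      rcases hf v₁ h1 with ⟨ha, hb⟩ | ⟨ha, hb⟩ <;>
        rcases hf v₂ h2 with ⟨hc, hd⟩ | ⟨hc, hd⟩ <;>
          rw [hf12] at ha hb
      · exact hne12 (ha.symm.trans hc)
      · rw [hc] at hb; rw [ha] at hd; omega
      · rw [hc] at hb; rw [ha] at hd; omega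
      · exact hne12 (ha.symm.trans hc)
    -- the element of the product ideal
    let g : Fin r → MvPolynomial (Fin n) K := fun i =>
      if hi : i = i0 then X t else X (l (f i hi))
    have hgmem : ∏ i, g i ∈ I := by
      rw [hIdef]
      refine Ideal.prod_mem_prod fun i _ => ?_
      by_cases hi : i = i0
      · subst hi
        simp only [g, dif_pos rfl]
        exact Ideal.subset_span ⟨t, hti0, rfl⟩
      · simp only [g, dif_neg hi]
        have hmem : l (f i hi) ∈ F i := by
          have hli := Finset.mem_inter.mp (hl (f i hi))
          rcases hf i hi with ⟨ha, -⟩ | ⟨ha, -⟩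
          · have := hli.1; rwa [ha] at this
          · have := hli.2; rwa [ha] at this
        exact Ideal.subset_span ⟨l (f i hi), hmem, rfl⟩
    have hcard : (Finset.univ : Finset (Fin (r - 1))).card ≤
        (Finset.univ.erase i0 : Finset (Fin r)).card := by
      rw [Finset.card_erase_of_mem (Finset.mem_univ _), Finset.card_univ, Finset.card_univ,
        Fintype.card_fin, Fintype.card_fin]
    have hgprod : ∏ i, g i = X t * z := by
      rw [← Finset.mul_prod_erase Finset.univ g (Finset.mem_univ i0)]
      have hgi0 : g i0 = X t := dif_pos rfl
      rw [hgi0, hzdef]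
      congr 1
      refine Finset.prod_bij (fun v hv => f v (Finset.ne_of_mem_erase hv))
        (fun v _ => Finset.mem_univ _)
        (fun v₁ hv₁ v₂ hv₂ h => ?_) (fun k hk => ?_) (fun v hv => ?_)
      · exact hfinj v₁ v₂ (Finset.ne_of_mem_erase hv₁) (Finset.ne_of_mem_erase hv₂) h
      · obtain ⟨v, hv, hvk⟩ := Finset.surj_on_of_inj_on_of_card_le
          (fun v hv => f v (Finset.ne_of_mem_erase hv))
          (fun v _ => Finset.mem_univ _)
          (fun v₁ v₂ hv₁ hv₂ h =>
            hfinj v₁ v₂ (Finset.ne_of_mem_erase hv₁) (Finset.ne_of_mem_erase hv₂) h)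
          hcard k hk
        exact ⟨v, hv, hvk.symm⟩
      · exact dif_neg (Finset.ne_of_mem_erase hv)
    rw [← hgprod]
    exact hgmem
  -- forward inclusion
  have hforward : Ideal.span (Set.range (X : Fin n → MvPolynomial (Fin n) K)) ≤
      I.colon ((Ideal.span {z} : Ideal (MvPolynomial (Fin n) K)) : Set (MvPolynomial (Fin n) K)) := by
    rw [Ideal.span_le]
    rintro _ ⟨t, rfl⟩
    exact Ideal.mem_colon_span_singleton.mpr (key t)
  -- characterization of the maximal ideal
  have hm : ∀ q : MvPolynomial (Fin n) K, coeff 0 q = 0 →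
      q ∈ Ideal.span (Set.range (X : Fin n → MvPolynomial (Fin n) K)) := by
    intro q hq
    rw [← Set.image_univ, mem_ideal_span_X_image]
    intro d hd
    by_contra hcon
    push_neg at hcon
    have hd0 : d = 0 := by
      ext i
      exact hcon i (Set.mem_univ i)
    rw [hd0] at hd
    exact (MvPolynomial.mem_support_iff.mp hd) hq
  refine ⟨part1, le_antisymm ?_ hforward⟩
  -- backward inclusion
  intro p hp
  set c : K := coeff 0 p with hc
  set q : MvPolynomial (Fin n) K := p - C c with hqdef
  have hq : q ∈ Ideal.span (Set.range (X : Fin n → MvPolynomial (Fin n) K)) := by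
    apply hm
    rw [hqdef, MvPolynomial.coeff_sub, MvPolynomial.coeff_zero_C, ← hc, sub_self]
  have hqc : q ∈ I.colon ((Ideal.span {z} : Ideal (MvPolynomial (Fin n) K)) : Set (MvPolynomial (Fin n) K)) := hforward hq
  have hCc : C c ∈ I.colon ((Ideal.span {z} : Ideal (MvPolynomial (Fin n) K)) : Set (MvPolynomial (Fin n) K)) := by
    have := Ideal.sub_mem _ hp hqc
    have heq : p - q = C c := by rw [hqdef]; ring
    rwa [heq] at this
  have hc0 : c = 0 := by
    by_contra hc0
    have hCz : C c * z ∈ I := Ideal.mem_colon_span_singleton.mp hCc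
    have : z ∈ I := by
      have := Ideal.mul_mem_left I (C c⁻¹) hCz
      rwa [← mul_assoc, ← MvPolynomial.C_mul, inv_mul_cancel₀ hc0, MvPolynomial.C_1,
        one_mul] at this
    exact part1 this
  have : p = q := by rw [hqdef, hc0, MvPolynomial.C_0, sub_zero]
  rw [this]
  exact hq
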